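/- For every x ≥ 0, Erdelyi's identity holds: ∫_{1/2}^∞ exp(−x²·z) / (4π·z·√(2z−1)) dz = (1/2)·(1 − Φ(x)), where Φ is the standard normal cumulative distribution function. -/

import Mathlib

open MeasureTheory Real Set

/-- Standard normal cumulative distribution function. -/
noncomputable def stdNormalCdf (x : ℝ) : ℝ :=
  ∫ t in Iic x, (1 / Real.sqrt (2 * π)) * Real.exp (-t ^ 2 / 2)


-- exp decay integral
lemma int_exp_neg_mul {c : ℝ} (hc : 0 < c) :
    ∫ v in Ioi (0:ℝ), Real.exp (-(c*v)) = 1/c := by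
  have h := integral_comp_mul_left_Ioi (fun x => Real.exp (-x)) 0 hc
  simp only [mul_zero] at h
  rw [integral_exp_neg_Ioi_zero] at h
  rw [h]
  simp [one_div]

-- substitution A: image set
lemma imageA : (fun u : ℝ => (u^2+1)/2) '' Ioi 0 = Ioi (1/2 : ℝ) := by
  ext y
  constructor
  · rintro ⟨u, hu, rfl⟩
    simp only [mem_Ioi] at *
    nlinarith
  · intro hy
    simp only [mem_Ioi] at hy
    refine ⟨Real.sqrt (2*y-1), ?_, ?_⟩
    · simp only [mem_Ioi]
      exact Real.sqrt_pos.mpr (by linarith)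
    · show (Real.sqrt (2*y-1) ^ 2 + 1)/2 = y
      rw [Real.sq_sqrt (by linarith : (0:ℝ) ≤ 2*y-1)]
      ring

lemma stepA (x : ℝ) :
    (∫ z in Ioi ((1:ℝ)/2), Real.exp (-x^2*z) / (4*π*z*Real.sqrt (2*z-1)))
      = ∫ u in Ioi (0:ℝ), Real.exp (-x^2/2) * Real.exp (-x^2*u^2/2) / (2*π*(1+u^2)) := by
  have hderiv : ∀ u ∈ Ioi (0:ℝ),
      HasDerivWithinAt (fun u : ℝ => (u^2+1)/2) u (Ioi 0) u := by
    intro u _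
    have : HasDerivAt (fun u : ℝ => (u^2+1)/2) u u := by
      simpa using (((hasDerivAt_pow 2 u).add_const 1).div_const 2)
    exact this.hasDerivWithinAt
  have hinj : InjOn (fun u : ℝ => (u^2+1)/2) (Ioi 0) := by
    intro a ha b hb h
    simp only [mem_Ioi] at ha hb
    have h2 : a^2 = b^2 := by dsimp at h; linarith
    have habs : |a| = |b| := by
      rw [← Real.sqrt_sq_eq_abs, ← Real.sqrt_sq_eq_abs, h2]
    rwa [abs_of_pos ha, abs_of_pos hb] at habs
  rw [← imageA, integral_image_eq_integral_abs_deriv_smul measurableSet_Ioi hderiv hinj]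
  refine setIntegral_congr_fun measurableSet_Ioi fun u hu => ?_
  simp only [mem_Ioi] at hu
  have h1 : 2*((u^2+1)/2)-1 = u^2 := by ring
  have h2 : Real.sqrt (2*((u^2+1)/2)-1) = u := by rw [h1, Real.sqrt_sq hu.le]
  have h3 : Real.exp (-x^2*((u^2+1)/2)) = Real.exp (-x^2/2) * Real.exp (-x^2*u^2/2) := by
    rw [← Real.exp_add]; congr 1; ring
  have hu0 : u ≠ 0 := hu.ne'
  have hpi : (π:ℝ) ≠ 0 := Real.pi_ne_zero
  have h1u : (1:ℝ)+u^2 ≠ 0 := by positivity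
  simp only [smul_eq_mul, abs_of_pos hu, h2, h3]
  field_simp
  ring

-- the double-integrand
noncomputable def F (x u v : ℝ) : ℝ := Real.exp (-(x^2/2+v)*u^2 - v)

lemma stepB (x u : ℝ) :
    ∫ v in Ioi (0:ℝ), F x u v = Real.exp (-x^2*u^2/2) / (1+u^2) := by
  have h1u : (0:ℝ) < 1+u^2 := by positivity
  have : ∀ v : ℝ, F x u v = Real.exp (-x^2*u^2/2) * Real.exp (-((1+u^2)*v)) := by
    intro v; rw [F, ← Real.exp_add]; congr 1; ring
  simp_rw [this]
  rw [MeasureTheory.integral_const_mul, int_exp_neg_mul h1u]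
  ring

lemma Fint_v (x u : ℝ) : IntegrableOn (fun v => F x u v) (Ioi 0) := by
  have h1u : (0:ℝ) < 1+u^2 := by positivity
  have : ∀ v : ℝ, F x u v = Real.exp (-x^2*u^2/2) * Real.exp (-(1+u^2)*v) := by
    intro v; rw [F, ← Real.exp_add]; congr 1; ring
  simp_rw [this]
  exact (exp_neg_integrableOn_Ioi 0 h1u).const_mul _

lemma Fnonneg (x u v : ℝ) : 0 ≤ F x u v := (Real.exp_pos _).le

lemma Fcont (x : ℝ) : Continuous (fun p : ℝ × ℝ => F x p.1 p.2) := by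
  unfold F; fun_prop

lemma Fprod_int (x : ℝ) :
    Integrable (fun p : ℝ × ℝ => F x p.1 p.2)
      ((volume.restrict (Ioi 0)).prod (volume.restrict (Ioi 0))) := by
  rw [integrable_prod_iff ((Fcont x).aestronglyMeasurable)]
  constructor
  · exact Filter.Eventually.of_forall fun u => Fint_v x u
  · have heq : ∀ u : ℝ, (∫ v in Ioi (0:ℝ), ‖F x u v‖)
        = Real.exp (-x^2*u^2/2) / (1+u^2) := by
      intro u
      rw [← stepB x u]
      exact setIntegral_congr_fun measurableSet_Ioi fun v _ =>
        Real.norm_of_nonneg (Fnonneg x u v)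
    simp_rw [heq]
    apply Integrable.mono' (g := fun u : ℝ => (1+u^2)⁻¹)
      integrable_inv_one_add_sq.restrict
    · apply Measurable.aestronglyMeasurable; fun_prop
    · refine Filter.Eventually.of_forall fun u => ?_
      have h1u : (0:ℝ) < 1+u^2 := by positivity
      rw [Real.norm_of_nonneg (by positivity)]
      rw [div_le_iff₀ h1u, inv_mul_cancel₀ h1u.ne']
      exact Real.exp_le_one_iff.mpr (by nlinarith [sq_nonneg x, sq_nonneg u, sq_nonneg (x*u)])

lemma stepC (x : ℝ) :
    (∫ u in Ioi (0:ℝ), ∫ v in Ioi (0:ℝ), F x u v)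
      = ∫ v in Ioi (0:ℝ), ∫ u in Ioi (0:ℝ), F x u v :=
  integral_integral_swap (Fprod_int x)

lemma stepD (x v : ℝ) (hv : 0 < v) :
    (∫ u in Ioi (0:ℝ), F x u v)
      = Real.exp (-v) * (Real.sqrt (π/(x^2/2+v)) / 2) := by
  have : ∀ u : ℝ, F x u v = Real.exp (-(x^2/2+v)*u^2) * Real.exp (-v) := by
    intro u; rw [F, ← Real.exp_add]; exact congrArg Real.exp (by ring)
  simp_rw [this]
  rw [MeasureTheory.integral_mul_const, integral_gaussian_Ioi]
  ring

lemma imageE {x : ℝ} (hx : 0 ≤ x) :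
    (fun t : ℝ => (t^2-x^2)/2) '' Ioi x = Ioi (0:ℝ) := by
  ext y
  constructor
  · rintro ⟨t, ht, rfl⟩
    simp only [mem_Ioi] at *
    nlinarith
  · intro hy
    simp only [mem_Ioi] at hy
    refine ⟨Real.sqrt (x^2+2*y), ?_, ?_⟩
    · simp only [mem_Ioi]
      have : x = Real.sqrt (x^2) := (Real.sqrt_sq hx).symm
      nth_rewrite 1 [this]
      exact Real.sqrt_lt_sqrt (by positivity) (by linarith)
    · show (Real.sqrt (x^2+2*y) ^ 2 - x^2)/2 = y
      rw [Real.sq_sqrt (by positivity : (0:ℝ) ≤ x^2+2*y)]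
      ring

lemma stepE {x : ℝ} (hx : 0 ≤ x) :
    (∫ v in Ioi (0:ℝ), Real.exp (-v) * (Real.sqrt (π/(x^2/2+v)) / 2))
      = (Real.exp (x^2/2) * Real.sqrt (2*π) / 2) * ∫ t in Ioi x, Real.exp (-t^2/2) := by
  have hderiv : ∀ t ∈ Ioi x,
      HasDerivWithinAt (fun t : ℝ => (t^2-x^2)/2) t (Ioi x) t := by
    intro t _
    have : HasDerivAt (fun t : ℝ => (t^2-x^2)/2) t t := by
      simpa using (((hasDerivAt_pow 2 t).sub_const (x^2)).div_const 2)
    exact this.hasDerivWithinAt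
  have hinj : InjOn (fun t : ℝ => (t^2-x^2)/2) (Ioi x) := by
    intro a ha b hb h
    simp only [mem_Ioi] at ha hb
    have ha0 : 0 < a := lt_of_le_of_lt hx ha
    have hb0 : 0 < b := lt_of_le_of_lt hx hb
    have h2 : a^2 = b^2 := by dsimp at h; linarith
    have habs : |a| = |b| := by
      rw [← Real.sqrt_sq_eq_abs, ← Real.sqrt_sq_eq_abs, h2]
    rwa [abs_of_pos ha0, abs_of_pos hb0] at habs
  rw [← imageE hx,
    integral_image_eq_integral_abs_deriv_smul measurableSet_Ioi hderiv hinj,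
    ← MeasureTheory.integral_const_mul]
  refine setIntegral_congr_fun measurableSet_Ioi fun t ht => ?_
  simp only [mem_Ioi] at ht
  have ht0 : 0 < t := lt_of_le_of_lt hx ht
  have h1 : x^2/2 + (t^2-x^2)/2 = t^2/2 := by ring
  have h2 : Real.sqrt (π/(t^2/2)) = Real.sqrt (2*π) / t := by
    rw [show π/(t^2/2) = (2*π)/t^2 by ring,
      Real.sqrt_div (by positivity : (0:ℝ) ≤ 2*π) (t^2),
      Real.sqrt_sq ht0.le]
  have h3 : Real.exp (-((t^2-x^2)/2)) = Real.exp (x^2/2) * Real.exp (-t^2/2) := by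
    rw [← Real.exp_add]; exact congrArg Real.exp (by ring)
  simp only [smul_eq_mul, abs_of_pos ht0, h1, h2, h3]
  field_simp


lemma gauss_int : Integrable (fun t : ℝ => (1 / Real.sqrt (2 * π)) * Real.exp (-t ^ 2 / 2)) := by
  simp_rw [show ∀ t:ℝ, -t^2/2 = -(1/2)*t^2 from fun t => by ring]
  exact (integrable_exp_neg_mul_sq (by norm_num : (0:ℝ) < 1/2)).const_mul _

lemma gauss_tot : ∫ t : ℝ, (1 / Real.sqrt (2 * π)) * Real.exp (-t ^ 2 / 2) = 1 := by
  simp_rw [show ∀ t:ℝ, -t^2/2 = -(1/2)*t^2 from fun t => by ring]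
  rw [MeasureTheory.integral_const_mul, integral_gaussian,
    show π/(1/2:ℝ) = 2*π by ring, one_div,
    inv_mul_cancel₀ (Real.sqrt_ne_zero'.mpr (by positivity))]

lemma stepF (x : ℝ) :
    1 - stdNormalCdf x = ∫ t in Ioi x, (1 / Real.sqrt (2 * π)) * Real.exp (-t ^ 2 / 2) := by
  have h := intervalIntegral.integral_Iic_add_Ioi (b := x)
    gauss_int.integrableOn gauss_int.integrableOn
  rw [stdNormalCdf]
  rw [gauss_tot] at h
  linarith


theorem erdelyi_identity (x : ℝ) (hx : 0 ≤ x) :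
    ∫ z in Ioi ((1:ℝ)/2),
        Real.exp (-x ^ 2 * z) / (4 * π * z * Real.sqrt (2 * z - 1))
      = (1 / 2) * (1 - stdNormalCdf x) := by

  rw [stepA x]
  have e1 : ∀ u:ℝ, Real.exp (-x^2/2) * Real.exp (-x^2*u^2/2) / (2*π*(1+u^2))
      = (Real.exp (-x^2/2)/(2*π)) * (Real.exp (-x^2*u^2/2)/(1+u^2)) := by
    intro u
    have h1u : (1:ℝ)+u^2 ≠ 0 := by positivity
    have hpi : (π:ℝ) ≠ 0 := Real.pi_ne_zero
    field_simp
  simp_rw [e1]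
  rw [MeasureTheory.integral_const_mul]
  have e2 : (∫ u in Ioi (0:ℝ), Real.exp (-x^2*u^2/2)/(1+u^2))
      = ∫ u in Ioi (0:ℝ), ∫ v in Ioi (0:ℝ), F x u v :=
    (setIntegral_congr_fun measurableSet_Ioi fun u _ => (stepB x u)).symm
  have e3 : (∫ v in Ioi (0:ℝ), ∫ u in Ioi (0:ℝ), F x u v)
      = ∫ v in Ioi (0:ℝ), Real.exp (-v) * (Real.sqrt (π/(x^2/2+v)) / 2) :=
    setIntegral_congr_fun measurableSet_Ioi fun v hv => stepD x v hv
  rw [e2, stepC x, e3, stepE hx, stepF x, MeasureTheory.integral_const_mul]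
  have h2pi : Real.sqrt (2*π) * Real.sqrt (2*π) = 2*π := Real.mul_self_sqrt (by positivity)
  have hexp : Real.exp (-x^2/2) * Real.exp (x^2/2) = 1 := by
    rw [← Real.exp_add, show -x^2/2 + x^2/2 = 0 by ring, Real.exp_zero]
  set I := ∫ t in Ioi x, Real.exp (-t^2/2) with hI
  set s := Real.sqrt (2*π) with hsdef
  have hs : s ≠ 0 := Real.sqrt_ne_zero'.mpr (by positivity)
  rw [show (2*π:ℝ) = s*s from (Real.mul_self_sqrt (by positivity)).symm]
  field_simp
  have hexp' : Real.exp (-(x^2/2)) * Real.exp (x^2/2) = 1 := by rw [← neg_div]; exact hexp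
  linear_combination I * hexp'
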